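/- Let 0 < q < 1, s > 1 real, and let \zeta[\{s\}^n] denote the multiple q-zeta value with n equal arguments s. Then for every positive integer n, n\,\zeta[\{s\}^n] = \sum_{k=1}^n (-1)^{k+1} \zeta[\{s\}^{n-k}] \sum_{j=0}^{k-1} \binom{k-1}{j} (1-q)^j \zeta[ks - j]. -/

import Mathlib

noncomputable def qnum (q : ℝ) (k : ℕ) : ℝ := (1 - q ^ k) / (1 - q)

noncomputable def qzeta (q s : ℝ) : ℝ :=
  ∑' k : ℕ+, q ^ ((s - 1) * ((k : ℕ) : ℝ)) / (qnum q k) ^ s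

noncomputable def qzetaRep (q s : ℝ) (n : ℕ) : ℝ :=
  ∑' k : {f : Fin n → ℕ // StrictAnti f ∧ ∀ i, 0 < f i},
    ∏ i, q ^ ((s - 1) * ((k.1 i : ℕ) : ℝ)) / (qnum q (k.1 i)) ^ s

namespace MQZ

open Finset

/-- strictly decreasing positive tuples -/
abbrev Tt (n : ℕ) := {f : Fin n → ℕ // StrictAnti f ∧ ∀ i, 0 < f i}
/-- finsets of positive naturals of card n -/
abbrev Ss (n : ℕ) := {s : Finset ℕ // s.card = n ∧ 0 ∉ s}

def tupleOfFinset {n : ℕ} (s : Ss n) : Tt n :=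
  ⟨fun i => (s.1.orderIsoOfFin s.2.1 i.rev : ℕ), by
    constructor
    · intro a b hab
      exact (s.1.orderIsoOfFin s.2.1).strictMono (by simpa using Fin.rev_lt_rev.mpr hab)
    · intro i
      have hmem := (s.1.orderIsoOfFin s.2.1 i.rev).2
      refine Nat.pos_of_ne_zero fun h => s.2.2 ?_
      have h' : ((s.1.orderIsoOfFin s.2.1 i.rev : ℕ)) = 0 := h
      rwa [h'] at hmem⟩

def finsetOfTuple {n : ℕ} (k : Tt n) : Ss n :=
  ⟨Finset.image k.1 Finset.univ, by
    rw [Finset.card_image_of_injective _ k.2.1.injective, card_univ, Fintype.card_fin], by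
    simp only [Finset.mem_image, mem_univ, true_and, not_exists]
    exact fun i h => (k.2.2 i).ne' h⟩

lemma tupleOfFinset_finsetOfTuple {n : ℕ} (k : Tt n) : tupleOfFinset (finsetOfTuple k) = k := by
  obtain ⟨f, hanti, hpos⟩ := k
  apply Subtype.ext
  funext i
  set s := (finsetOfTuple ⟨f, hanti, hpos⟩).1 with hs
  have hcard : s.card = n := (finsetOfTuple ⟨f, hanti, hpos⟩).2.1
  have hmono : StrictMono (f ∘ Fin.rev) := by
    intro a b hab
    exact hanti (Fin.rev_lt_rev.mpr (by simpa using hab))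
  have hmem : ∀ j : Fin n, (f ∘ Fin.rev) j ∈ s := by
    intro j; exact Finset.mem_image.mpr ⟨Fin.rev j, mem_univ _, rfl⟩
  have huniq := Finset.orderEmbOfFin_unique hcard hmem hmono
  show ((s.orderIsoOfFin hcard i.rev : ℕ)) = f i
  rw [Finset.coe_orderIsoOfFin_apply, ← congrFun huniq i.rev]
  simp

lemma finsetOfTuple_tupleOfFinset {n : ℕ} (s : Ss n) : finsetOfTuple (tupleOfFinset s) = s := by
  apply Subtype.ext
  ext a
  simp only [finsetOfTuple, tupleOfFinset, Finset.mem_image, mem_univ, true_and]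
  constructor
  · rintro ⟨i, rfl⟩; exact (s.1.orderIsoOfFin s.2.1 i.rev).2
  · intro ha
    obtain ⟨j, hj⟩ := (s.1.orderIsoOfFin s.2.1).surjective ⟨a, ha⟩
    exact ⟨j.rev, by simp [hj]⟩

def tupleEquiv (n : ℕ) : Tt n ≃ Ss n where
  toFun := finsetOfTuple
  invFun := tupleOfFinset
  left_inv := tupleOfFinset_finsetOfTuple
  right_inv := finsetOfTuple_tupleOfFinset

lemma prod_finsetOfTuple {n : ℕ} (x : ℕ → ℝ) (k : Tt n) :
    ∏ a ∈ (finsetOfTuple k).1, x a = ∏ i, x (k.1 i) := by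
  rw [finsetOfTuple]
  exact Finset.prod_image fun a _ b _ h => k.2.1.injective h


section Abstract
open Filter Topology

variable {x : ℕ → ℝ}

lemma summable_pi (hsum : Summable x) (hxnn : ∀ i, 0 ≤ x i) (n : ℕ) :
    Summable (fun f : Fin n → ℕ => ∏ i, x (f i)) := by
  induction n with
  | zero => exact .of_finite
  | succ m ih =>
      have h2 : Summable (fun p : ℕ × (Fin m → ℕ) => x p.1 * ∏ i, x (p.2 i)) :=
        Summable.mul_of_nonneg (f := x) (g := fun f : Fin m → ℕ => ∏ i, x (f i))
          hsum ih hxnn (fun f => Finset.prod_nonneg fun i _ => hxnn _)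
      refine ((Fin.consEquiv (fun _ : Fin (m+1) => ℕ)).summable_iff
        (f := fun f : Fin (m+1) → ℕ => ∏ i, x (f i))).mp ?_
      refine h2.congr fun p => ?_
      simp [Fin.prod_univ_succ]

lemma summable_T (hsum : Summable x) (hxnn : ∀ i, 0 ≤ x i) (n : ℕ) :
    Summable (fun k : Tt n => ∏ i, x (k.1 i)) :=
  (summable_pi hsum hxnn n).comp_injective Subtype.val_injective

/-- the elementary-symmetric summand indexed by finsets -/
noncomputable def elemF (x : ℕ → ℝ) (n : ℕ) : Ss n → ℝ := fun s => ∏ a ∈ s.1, x a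

lemma summable_S (hsum : Summable x) (hxnn : ∀ i, 0 ≤ x i) (n : ℕ) :
    Summable (elemF x n) := by
  rw [← (tupleEquiv n).summable_iff]
  have : (elemF x n) ∘ (tupleEquiv n) = fun k : Tt n => ∏ i, x (k.1 i) := by
    funext k; exact prod_finsetOfTuple x k
  rw [this]
  exact summable_T hsum hxnn n

/-- truncation finsets -/
noncomputable def BN (n N : ℕ) : Finset (Ss n) :=
  have : DecidablePred fun s : Finset ℕ => s.card = n ∧ 0 ∉ s := fun s => instDecidableAnd
  (Finset.powersetCard n (Finset.Icc 1 N)).subtype _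

lemma sum_BN (x : ℕ → ℝ) (n N : ℕ) :
    ∑ s ∈ BN n N, elemF x n s = ∑ t ∈ Finset.powersetCard n (Finset.Icc 1 N), ∏ a ∈ t, x a := by
  classical
  rw [BN]
  rw [show (∑ s ∈ (Finset.powersetCard n (Finset.Icc 1 N)).subtype
        (fun s : Finset ℕ => s.card = n ∧ 0 ∉ s), elemF x n s)
      = ∑ t ∈ ((Finset.powersetCard n (Finset.Icc 1 N)).subtype
        (fun s : Finset ℕ => s.card = n ∧ 0 ∉ s)).map (Function.Embedding.subtype _),
        ∏ a ∈ t, x a from (Finset.sum_subtype_map_embedding (g := fun t => ∏ a ∈ t, x a)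
        (f := elemF x n) (fun t _ => rfl)).symm,
    Finset.subtype_map, Finset.filter_true_of_mem]
  intro t ht
  rw [Finset.mem_powersetCard] at ht
  refine ⟨ht.2, fun h0 => ?_⟩
  have := ht.1 h0
  simp at this

lemma BN_monotone (n : ℕ) : Monotone (BN n) := by
  intro N M hNM s hs
  classical
  simp only [BN, Finset.mem_subtype] at hs ⊢
  exact Finset.powersetCard_mono (Finset.Icc_subset_Icc_right hNM) hs

lemma BN_cofinal (n : ℕ) (s : Ss n) : ∃ N, s ∈ BN n N := by
  classical
  refine ⟨s.1.sup id, ?_⟩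
  simp only [BN, Finset.mem_subtype, Finset.mem_powersetCard]
  refine ⟨fun a ha => Finset.mem_Icc.mpr ⟨?_, Finset.le_sup (f := id) ha⟩, s.2.1⟩
  exact Nat.one_le_iff_ne_zero.mpr fun h => s.2.2 (h ▸ ha)

lemma tendsto_E (hsum : Summable x) (hxnn : ∀ i, 0 ≤ x i) (n : ℕ) :
    Tendsto (fun N => ∑ t ∈ Finset.powersetCard n (Finset.Icc 1 N), ∏ a ∈ t, x a)
      atTop (𝓝 (∑' s : Ss n, elemF x n s)) := by
  have hB : Tendsto (BN n) atTop atTop :=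
    tendsto_atTop_finset_of_monotone (BN_monotone n) (BN_cofinal n)
  have h := ((summable_S hsum hxnn n).hasSum).comp hB
  have he : (fun s : Finset (Ss n) => ∑ b ∈ s, elemF x n b) ∘ BN n
      = fun N => ∑ t ∈ Finset.powersetCard n (Finset.Icc 1 N), ∏ a ∈ t, x a := by
    funext N; exact sum_BN x n N
  rwa [he] at h


lemma summable_pow (hsum : Summable x) (hxnn : ∀ i, 0 ≤ x i) (hx1 : ∀ i, x i ≤ 1)
    (k : ℕ) (hk : 1 ≤ k) : Summable (fun i => x i ^ k) :=
  Summable.of_nonneg_of_le (fun i => pow_nonneg (hxnn i) k)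
    (fun i => pow_le_of_le_one (hxnn i) (hx1 i) (by omega)) hsum

lemma sum_Icc_pow (hx0 : x 0 = 0) (k : ℕ) (hk : 1 ≤ k) (N : ℕ) :
    ∑ i ∈ Finset.Icc 1 N, x i ^ k = ∑ i ∈ Finset.range (N + 1), x i ^ k := by
  have h : Finset.range (N + 1) = insert 0 (Finset.Icc 1 N) := by
    ext i; simp [Finset.mem_range, Finset.mem_Icc, Finset.mem_insert]; omega
  rw [h, Finset.sum_insert (by simp), hx0, zero_pow (by omega), zero_add]

lemma tendsto_P (hsum : Summable x) (hxnn : ∀ i, 0 ≤ x i) (hx1 : ∀ i, x i ≤ 1)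
    (hx0 : x 0 = 0) (k : ℕ) (hk : 1 ≤ k) :
    Tendsto (fun N => ∑ i ∈ Finset.Icc 1 N, x i ^ k) atTop (𝓝 (∑' i, x i ^ k)) := by
  have h := (summable_pow hsum hxnn hx1 k hk).hasSum.tendsto_sum_nat
  have h2 := h.comp (tendsto_add_atTop_nat 1)
  have he : ((fun N => ∑ i ∈ Finset.range N, x i ^ k) ∘ fun N => N + 1)
      = fun N => ∑ i ∈ Finset.Icc 1 N, x i ^ k := by
    funext N; exact (sum_Icc_pow hx0 k hk N).symm
  rwa [he] at h2

lemma esymm_coe (x : ℕ → ℝ) (u : Finset ℕ) (m : ℕ) :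
    ∑ t ∈ Finset.powersetCard m (Finset.univ : Finset ↥u), ∏ i ∈ t, x ↑i
      = ∑ t ∈ Finset.powersetCard m u, ∏ a ∈ t, x a := by
  classical
  conv_rhs => rw [← Finset.attach_map_val (s := u), Finset.powersetCard_map, Finset.sum_map]
  rw [Finset.univ_eq_attach]
  refine Finset.sum_congr rfl fun t _ => ?_
  rw [show (Finset.mapEmbedding (Function.Embedding.subtype fun x => x ∈ u)).toEmbedding t
      = t.map (Function.Embedding.subtype fun x => x ∈ u) from Finset.mapEmbedding_apply ..]
  rw [Finset.prod_map]
  rfl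

lemma neg_one_sign (n k : ℕ) (hk : k ≤ n) :
    ((-1 : ℝ)) ^ (n + 1) * (-1) ^ (n - k) = (-1) ^ (k + 1) := by
  have h : (n + 1) + (n - k) = (k + 1) + 2 * (n - k) := by omega
  rw [← pow_add, h, pow_add, pow_mul, neg_one_sq, one_pow, mul_one]

lemma newton_fin (x : ℕ → ℝ) (N n : ℕ) (hn : 0 < n) :
    (n : ℝ) * (∑ t ∈ Finset.powersetCard n (Finset.Icc 1 N), ∏ a ∈ t, x a)
      = ∑ k ∈ Finset.Icc 1 n, (-1 : ℝ) ^ (k + 1) *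
          (∑ t ∈ Finset.powersetCard (n - k) (Finset.Icc 1 N), ∏ a ∈ t, x a) *
          (∑ i ∈ Finset.Icc 1 N, x i ^ k) := by
  classical
  set u := Finset.Icc 1 N
  set σ := ↥u
  have hnewton := congrArg (MvPolynomial.aeval (fun i : σ => x ↑i))
    (MvPolynomial.mul_esymm_eq_sum σ ℝ n)
  have haes : ∀ m, MvPolynomial.aeval (fun i : σ => x ↑i) (MvPolynomial.esymm σ ℝ m)
      = ∑ t ∈ Finset.powersetCard m u, ∏ a ∈ t, x a := by
    intro m
    rw [MvPolynomial.aeval_esymm_eq_multiset_esymm, Finset.esymm_map_val, esymm_coe]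
  have haps : ∀ m, MvPolynomial.aeval (fun i : σ => x ↑i) (MvPolynomial.psum σ ℝ m)
      = ∑ i ∈ u, x i ^ m := by
    intro m
    rw [MvPolynomial.psum, map_sum]
    simp only [map_pow, MvPolynomial.aeval_X]
    rw [Finset.univ_eq_attach, Finset.sum_attach u (fun i => x i ^ m)]
  rw [map_mul, map_natCast, haes, map_mul, map_pow, map_neg, map_one, map_sum] at hnewton
  simp only [map_mul, map_pow, map_neg, map_one, haes, haps] at hnewton
  rw [hnewton]
  rw [Finset.mul_sum]
  refine Finset.sum_nbij' (i := fun (a : ℕ × ℕ) => a.2) (j := fun k => (n - k, k))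
    ?_ ?_ ?_ ?_ ?_
  all_goals intro a ha
  all_goals simp only [Finset.mem_filter, Finset.HasAntidiagonal.mem_antidiagonal, Finset.mem_Icc] at ha ⊢
  · omega
  · omega
  · exact Prod.ext (by omega) rfl
  · have hs := neg_one_sign n a.2 (by omega)
    have h1 : a.1 = n - a.2 := by omega
    rw [h1, ← hs]
    ring

lemma main_abstract (hsum : Summable x) (hxnn : ∀ i, 0 ≤ x i) (hx1 : ∀ i, x i ≤ 1)
    (hx0 : x 0 = 0) (n : ℕ) (hn : 0 < n) :
    (n : ℝ) * (∑' s : Ss n, elemF x n s)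
      = ∑ k ∈ Finset.Icc 1 n, (-1 : ℝ) ^ (k + 1) * (∑' s : Ss (n - k), elemF x (n - k) s) *
          (∑' i, x i ^ k) := by
  have h1 : Tendsto (fun N => (n : ℝ) *
      (∑ t ∈ Finset.powersetCard n (Finset.Icc 1 N), ∏ a ∈ t, x a)) atTop
      (𝓝 ((n : ℝ) * (∑' s : Ss n, elemF x n s))) :=
    (tendsto_E hsum hxnn n).const_mul _
  have h2 : Tendsto (fun N => ∑ k ∈ Finset.Icc 1 n, (-1 : ℝ) ^ (k + 1) *
      (∑ t ∈ Finset.powersetCard (n - k) (Finset.Icc 1 N), ∏ a ∈ t, x a) *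
      (∑ i ∈ Finset.Icc 1 N, x i ^ k)) atTop
      (𝓝 (∑ k ∈ Finset.Icc 1 n, (-1 : ℝ) ^ (k + 1) *
        (∑' s : Ss (n - k), elemF x (n - k) s) * (∑' i, x i ^ k))) := by
    refine tendsto_finset_sum _ fun k hk => ?_
    have hk1 : 1 ≤ k := (Finset.mem_Icc.mp hk).1
    exact (((tendsto_E hsum hxnn (n - k)).const_mul _).mul
      (tendsto_P hsum hxnn hx1 hx0 k hk1))
  have heq : (fun N => (n : ℝ) *
      (∑ t ∈ Finset.powersetCard n (Finset.Icc 1 N), ∏ a ∈ t, x a))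
      = fun N => ∑ k ∈ Finset.Icc 1 n, (-1 : ℝ) ^ (k + 1) *
      (∑ t ∈ Finset.powersetCard (n - k) (Finset.Icc 1 N), ∏ a ∈ t, x a) *
      (∑ i ∈ Finset.Icc 1 N, x i ^ k) := by
    funext N; exact newton_fin x N n hn
  rw [heq] at h1
  exact tendsto_nhds_unique h1 h2

end Abstract

noncomputable def xpow (q t : ℝ) (i : ℕ) : ℝ := q ^ ((t - 1) * (i : ℝ)) / (qnum q i) ^ t

lemma key (q s : ℝ) (hq0 : 0 < q) (hq1 : q < 1) (hs : 1 < s) (k i : ℕ) (hk : 1 ≤ k)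
    (hi : 1 ≤ i) :
    ∑ j ∈ Finset.range k, ((k - 1).choose j : ℝ) * (1 - q) ^ j * xpow q ((k : ℝ) * s - j) i
      = (xpow q s i) ^ k := by
  have hq' : (0 : ℝ) < 1 - q := by linarith
  have hqi : (0 : ℝ) < q ^ i := pow_pos hq0 i
  have hqilt : q ^ i < 1 := pow_lt_one₀ hq0.le hq1 (by omega)
  have hb : 0 < qnum q i := div_pos (by linarith) hq'
  set ir := (i : ℝ) with hir
  set b := qnum q i with hbdef
  set A := q ^ (((k : ℝ) * s - 1) * ir) / b ^ ((k : ℝ) * s) with hA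
  set r := (1 - q) * b / q ^ i with hr
  have hqir : q ^ ir = q ^ i := Real.rpow_natCast q i
  -- step 1
  have step1 : ∀ j ∈ Finset.range k, ((k - 1).choose j : ℝ) * (1 - q) ^ j *
      xpow q ((k : ℝ) * s - j) i = ((k - 1).choose j : ℝ) * (A * r ^ j) := by
    intro j hj
    rw [xpow]
    have e1 : ((k : ℝ) * s - j - 1) * ir = ((k : ℝ) * s - 1) * ir - (j : ℝ) * ir := by ring
    rw [e1, Real.rpow_sub hq0]
    rw [show b ^ ((k : ℝ) * s - (j : ℝ)) = b ^ ((k : ℝ) * s) / b ^ (j : ℝ) from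
      Real.rpow_sub hb _ _]
    rw [Real.rpow_natCast b j]
    have e3 : q ^ ((j : ℝ) * ir) = (q ^ i : ℝ) ^ j := by
      rw [mul_comm, Real.rpow_mul hq0.le, hqir, Real.rpow_natCast]
    rw [e3, hA, hr]
    have h1 : b ^ ((k : ℝ) * s) ≠ 0 := ne_of_gt (Real.rpow_pos_of_pos hb _)
    have h2 : (q ^ i : ℝ) ≠ 0 := ne_of_gt hqi
    have h3 : b ≠ 0 := ne_of_gt hb
    field_simp
    have h2' : ((q ^ i : ℝ)) ^ j ≠ 0 := pow_ne_zero _ h2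
    rw [div_pow, mul_pow, mul_assoc _ ((q ^ i) ^ j), mul_div_assoc', mul_div_cancel_left₀ _ h2']
    ring
  rw [Finset.sum_congr rfl step1]
  -- step 2
  have hpow : (r + 1) ^ (k - 1) = ∑ j ∈ Finset.range k, r ^ j * 1 ^ (k - 1 - j) *
      ((k - 1).choose j : ℝ) := by
    rw [add_pow, Nat.sub_add_cancel hk]
  have step2 : ∑ j ∈ Finset.range k, ((k - 1).choose j : ℝ) * (A * r ^ j)
      = A * (r + 1) ^ (k - 1) := by
    rw [hpow, Finset.mul_sum]
    refine Finset.sum_congr rfl fun j _ => ?_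
    rw [one_pow]; ring
  rw [step2]
  -- step 3
  have hnum : (1 - q) * b = 1 - q ^ i := by
    rw [hbdef, qnum]; field_simp
  have step3 : r + 1 = ((q ^ i : ℝ))⁻¹ := by
    rw [hr, hnum]; field_simp; ring
  rw [step3]
  -- step 4
  have e4 : ((q ^ i : ℝ))⁻¹ ^ (k - 1) = q ^ (-ir * ((k : ℝ) - 1)) := by
    rw [← hqir, ← Real.rpow_neg hq0.le, ← Real.rpow_natCast (q ^ (-ir)) (k - 1),
      ← Real.rpow_mul hq0.le, Nat.cast_sub hk, Nat.cast_one]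
  rw [e4, hA]
  rw [xpow, div_pow, ← Real.rpow_natCast (q ^ ((s - 1) * ir)) k, ← Real.rpow_mul hq0.le,
    ← Real.rpow_natCast (b ^ s) k, ← Real.rpow_mul hb.le]
  rw [div_mul_eq_mul_div, ← Real.rpow_add hq0]
  rw [show ((k : ℝ) * s - 1) * ir + -ir * ((k : ℝ) - 1) = (s - 1) * ir * (k : ℝ) by ring,
    show s * (k : ℝ) = (k : ℝ) * s by ring]

section facts
variable {q t : ℝ} (hq0 : 0 < q) (hq1 : q < 1)

lemma qnum_zero : qnum q 0 = 0 := by simp [qnum]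

lemma xpow_zero (ht : 0 < t) : xpow q t 0 = 0 := by
  rw [xpow, qnum_zero, Real.zero_rpow (ne_of_gt ht), div_zero]

include hq0 hq1 in
lemma qnum_pos {i : ℕ} (hi : 1 ≤ i) : 0 < qnum q i :=
  div_pos (by linarith [pow_lt_one₀ hq0.le hq1 (by omega : i ≠ 0)]) (by linarith)

include hq0 hq1 in
lemma one_le_qnum {i : ℕ} (hi : 1 ≤ i) : 1 ≤ qnum q i := by
  rw [qnum, le_div_iff₀ (by linarith), one_mul]
  have : q ^ i ≤ q ^ 1 := pow_le_pow_of_le_one hq0.le hq1.le hi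
  rw [pow_one] at this
  linarith

include hq0 hq1 in
lemma xpow_nonneg (i : ℕ) : 0 ≤ xpow q t i := by
  rw [xpow]
  exact div_nonneg (Real.rpow_nonneg hq0.le _) (Real.rpow_nonneg
    (by by_cases h : i = 0; · simp [h, qnum_zero]
        · exact (qnum_pos hq0 hq1 (by omega)).le) _)

include hq0 hq1 in
lemma xpow_le_one (ht : 1 < t) (i : ℕ) : xpow q t i ≤ 1 := by
  by_cases h : i = 0
  · rw [h, xpow_zero (by linarith)]; norm_num
  · have hb := qnum_pos hq0 hq1 (i := i) (by omega)
    rw [xpow, div_le_one (Real.rpow_pos_of_pos hb _)]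
    calc q ^ ((t - 1) * (i : ℝ)) ≤ 1 := by
          refine Real.rpow_le_one hq0.le hq1.le ?_
          have h1 : (0:ℝ) ≤ t - 1 := by linarith
          positivity
      _ ≤ qnum q i ^ t := Real.one_le_rpow (one_le_qnum hq0 hq1 (by omega)) (by linarith)

include hq0 hq1 in
lemma xpow_le_geom (ht : 1 < t) (i : ℕ) : xpow q t i ≤ (q ^ (t - 1)) ^ i := by
  by_cases h : i = 0
  · rw [h, xpow_zero (by linarith)]; norm_num
  · have hb := qnum_pos hq0 hq1 (i := i) (by omega)
    have h1 : 1 ≤ qnum q i ^ t :=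
      Real.one_le_rpow (one_le_qnum hq0 hq1 (by omega)) (by linarith)
    calc xpow q t i ≤ q ^ ((t - 1) * (i : ℝ)) := by
          rw [xpow]
          exact div_le_self (Real.rpow_nonneg hq0.le _) h1
      _ = (q ^ (t - 1)) ^ i := by
          rw [← Real.rpow_natCast (q ^ (t - 1)) i, ← Real.rpow_mul hq0.le]

include hq0 hq1 in
lemma summable_xpow (ht : 1 < t) : Summable (xpow q t) := by
  refine Summable.of_nonneg_of_le (xpow_nonneg hq0 hq1) (xpow_le_geom hq0 hq1 ht) ?_
  exact summable_geometric_of_lt_one (Real.rpow_nonneg hq0.le _)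
    (Real.rpow_lt_one hq0.le hq1 (by linarith))

include hq0 hq1 in
lemma qzeta_eq (ht : 1 < t) : qzeta q t = ∑' i : ℕ, xpow q t i := by
  rw [qzeta]
  have hinj : Function.Injective ((↑·) : ℕ+ → ℕ) := fun a b h => PNat.coe_injective h
  have hsupp : Function.support (xpow q t) ⊆ Set.range ((↑·) : ℕ+ → ℕ) := by
    intro m hm
    rcases Nat.eq_zero_or_pos m with h | h
    · exact absurd (h ▸ xpow_zero (t := t) (by linarith)) hm
    · exact ⟨⟨m, h⟩, rfl⟩
  rw [← hinj.tsum_eq hsupp]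
  rfl

end facts

lemma psum_eq (q s : ℝ) (hq0 : 0 < q) (hq1 : q < 1) (hs : 1 < s) (k : ℕ) (hk : 1 ≤ k) :
    ∑ j ∈ Finset.range k, ((k - 1).choose j : ℝ) * (1 - q) ^ j * qzeta q ((k : ℝ) * s - (j : ℝ))
      = ∑' i : ℕ, (xpow q s i) ^ k := by
  have hgt : ∀ j ∈ Finset.range k, 1 < (k : ℝ) * s - (j : ℝ) := by
    intro j hj
    have h1 : (1 : ℝ) ≤ (k : ℝ) := by exact_mod_cast hk
    have h2 : (j : ℝ) ≤ (k : ℝ) - 1 := by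
      have := Finset.mem_range.mp hj
      have : (j : ℝ) ≤ (k : ℝ) - 1 := by
        have hj' : j + 1 ≤ k := this
        exact_mod_cast (by exact_mod_cast Nat.le_sub_one_of_lt (Finset.mem_range.mp hj) :
          (j : ℤ) ≤ (k : ℤ) - 1)
      exact this
    nlinarith
  rw [Finset.sum_congr rfl fun j hj => by
    rw [qzeta_eq hq0 hq1 (hgt j hj), ← tsum_mul_left]]
  rw [← Summable.tsum_finsetSum (fun j hj => (summable_xpow hq0 hq1 (hgt j hj)).mul_left _)]
  refine tsum_congr fun i => ?_
  rcases Nat.eq_zero_or_pos i with h | h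
  · subst h
    rw [xpow_zero (by linarith), zero_pow (by omega)]
    refine Finset.sum_eq_zero fun j hj => ?_
    rw [xpow_zero (by linarith [hgt j hj]), mul_zero]
  · exact key q s hq0 hq1 hs k i hk h

end MQZ

theorem qzeta_period_one_recurrence (q s : ℝ) (hq0 : 0 < q) (hq1 : q < 1)
    (hs : 1 < s) (n : ℕ) (hn : 0 < n) :
    (n : ℝ) * qzetaRep q s n
      = ∑ k ∈ Finset.Icc 1 n, (-1 : ℝ) ^ (k + 1) * qzetaRep q s (n - k) *
          ∑ j ∈ Finset.range k,
            ((k - 1).choose j : ℝ) * (1 - q) ^ j * qzeta q ((k : ℝ) * s - (j : ℝ)) := by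
  classical
  set x := MQZ.xpow q s with hx
  have hsum : Summable x := MQZ.summable_xpow hq0 hq1 hs
  have hnn : ∀ i, 0 ≤ x i := MQZ.xpow_nonneg hq0 hq1
  have hle1 : ∀ i, x i ≤ 1 := MQZ.xpow_le_one hq0 hq1 hs
  have h0 : x 0 = 0 := MQZ.xpow_zero (by linarith)
  have hrep : ∀ m : ℕ, qzetaRep q s m = ∑' t : MQZ.Ss m, MQZ.elemF x m t := by
    intro m
    rw [qzetaRep, ← (MQZ.tupleEquiv m).tsum_eq (f := MQZ.elemF x m)]
    exact tsum_congr fun k => (MQZ.prod_finsetOfTuple x k).symm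
  rw [hrep n, MQZ.main_abstract hsum hnn hle1 h0 n hn]
  refine Finset.sum_congr rfl fun k hk => ?_
  rw [hrep (n - k), MQZ.psum_eq q s hq0 hq1 hs k (Finset.mem_Icc.mp hk).1]
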